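/- arXiv:math/0603268 — 2 statements merged into one kernel-verified Lean document; each statement's English description precedes it below -/
import Mathlib

section
/- Let Γ be a discrete cocompact subgroup of SL(2,ℝ) and let φ be a meromorphic function on ℍ satisfying φ(γ·z) = (cz+d)²·φ(z) + c·(cz+d) for all γ = [[a,b],[c,d]] ∈ Γ, holomorphic outside the Γ-orbit of i, with a simple pole at i of residue 𝒦. For a meromorphic modular form f of weight k over Γ whose poles lie in the Γ-orbit of i, define D_φ(f) = f′ − k·φ·f. Then D_φ(f) is a meromorphic modular form of weight k+2 over Γ with poles only in the Γ-orbit of i, and ord_i(D_φ(f)) ≥ ord_i(f) − 1, with equality ord_i(D_φ(f)) = ord_i(f) − 1 if and only if ord_i(f) ≠ k·𝒦, where ord_i denotes the order of vanishing at z = i. -/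
open Complex Finset MeasureTheory

noncomputable section

abbrev SL2R := Matrix.SpecialLinearGroup (Fin 2) ℝ

instance : TopologicalSpace SL2R :=
  TopologicalSpace.induced (fun g : SL2R => (g : Matrix (Fin 2) (Fin 2) ℝ)) inferInstance

namespace Quasimodular

/-- The upper half-plane, as a subset of `ℂ`. -/
def UH : Set ℂ := {z : ℂ | 0 < z.im}

/-- Entries of a matrix in `SL(2, ℝ)`, as complex numbers. -/
def ga (γ : SL2R) : ℂ := ((γ : Matrix (Fin 2) (Fin 2) ℝ) 0 0 : ℝ)
def gb (γ : SL2R) : ℂ := ((γ : Matrix (Fin 2) (Fin 2) ℝ) 0 1 : ℝ)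
def gc (γ : SL2R) : ℂ := ((γ : Matrix (Fin 2) (Fin 2) ℝ) 1 0 : ℝ)
def gd (γ : SL2R) : ℂ := ((γ : Matrix (Fin 2) (Fin 2) ℝ) 1 1 : ℝ)

/-- Möbius action `γ · z = (a z + b)/(c z + d)`. -/
def moeb (γ : SL2R) (z : ℂ) : ℂ := (ga γ * z + gb γ) / (gc γ * z + gd γ)

/-- The automorphy factor `c z + d`. -/
def jfac (γ : SL2R) (z : ℂ) : ℂ := gc γ * z + gd γ

/-- Moderate growth on the upper half-plane. -/
def ModerateGrowth (f : ℂ → ℂ) : Prop :=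
  ∃ (C : ℝ) (N : ℕ), ∀ z ∈ UH, ‖f z‖ ≤ C * (z.im + z.im⁻¹) ^ N

/-- Transformation law of a quasimodular form of weight `k` and depth `≤ p`
with coefficient functions `F 0, …, F p`:
`(cz+d)^(-k) f(γ·z) = ∑_{j=0}^{p} F j (z) (c/(cz+d))^j`. -/
def QMRel (Γ : Subgroup SL2R) (k : ℤ) (p : ℕ) (f : ℂ → ℂ) (F : ℕ → ℂ → ℂ) : Prop :=
  ∀ γ ∈ Γ, ∀ z ∈ UH,
    f (moeb γ z) = jfac γ z ^ k *
      ∑ j ∈ Finset.range (p + 1), F j z * (gc γ / jfac γ z) ^ j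

/-- `f` is a quasimodular form of weight `k` and depth `≤ p` over `Γ`
with coefficient functions `F`. -/
def IsQMWith (Γ : Subgroup SL2R) (k : ℤ) (p : ℕ) (f : ℂ → ℂ) (F : ℕ → ℂ → ℂ) : Prop :=
  DifferentiableOn ℂ f UH ∧ ModerateGrowth f ∧ F 0 = f ∧ QMRel Γ k p f F

/-- `f` is a quasimodular form of weight `k` and depth `≤ p` over `Γ`. -/
def IsQM (Γ : Subgroup SL2R) (k : ℤ) (p : ℕ) (f : ℂ → ℂ) : Prop :=
  ∃ F : ℕ → ℂ → ℂ, IsQMWith Γ k p f F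

/-- `f` is a (holomorphic) modular form of weight `k` over `Γ`. -/
def IsModular (Γ : Subgroup SL2R) (k : ℤ) (f : ℂ → ℂ) : Prop :=
  DifferentiableOn ℂ f UH ∧ ModerateGrowth f ∧
    ∀ γ ∈ Γ, ∀ z ∈ UH, f (moeb γ z) = jfac γ z ^ k * f z

/-- `Γ` has finite covolume: some measurable subset of `ℍ` of finite hyperbolic
area meets every `Γ`-orbit. -/
def FiniteCovolume (Γ : Subgroup SL2R) : Prop :=
  ∃ F : Set ℂ, F ⊆ UH ∧ MeasurableSet F ∧
    (∀ z ∈ UH, ∃ γ ∈ Γ, moeb γ z ∈ F) ∧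
    (∫⁻ z in F, ENNReal.ofReal (1 / z.im ^ 2)) < ⊤

/-- `Γ` is cocompact: some compact subset of `ℍ` meets every `Γ`-orbit. -/
def Cocompact (Γ : Subgroup SL2R) : Prop :=
  ∃ K : Set ℂ, K ⊆ UH ∧ IsCompact K ∧ ∀ z ∈ UH, ∃ γ ∈ Γ, moeb γ z ∈ K

/-- The `Γ`-orbit of the point `i` in the upper half-plane. -/
def OrbitI (Γ : Subgroup SL2R) : Set ℂ := {w : ℂ | ∃ γ ∈ Γ, w = moeb γ Complex.I}

/-- `f` has at most a simple pole at `z₀`. -/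
def SimplePoleAtMost (f : ℂ → ℂ) (z₀ : ℂ) : Prop :=
  ∃ g : ℂ → ℂ, AnalyticAt ℂ g z₀ ∧
    ∀ᶠ w in nhdsWithin z₀ {z₀}ᶜ, f w = g w / (w - z₀)

/-- `f` has order of vanishing exactly `m` at `z₀` (negative `m` for a pole). -/
def OrderAt (f : ℂ → ℂ) (z₀ : ℂ) (m : ℤ) : Prop :=
  ∃ g : ℂ → ℂ, AnalyticAt ℂ g z₀ ∧ g z₀ ≠ 0 ∧
    ∀ᶠ w in nhdsWithin z₀ {z₀}ᶜ, f w = (w - z₀) ^ m * g w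

open Filter Topology in
theorem aderiv {f : ℂ → ℂ} {x : ℂ} (h : AnalyticAt ℂ f x) : AnalyticAt ℂ (deriv f) x := by
  obtain ⟨s, hs, h⟩ := h.exists_mem_nhds_analyticOnNhd
  exact h.deriv x (mem_of_mem_nhds hs)

lemma det_rel (γ : SL2R) : ga γ * gd γ - gb γ * gc γ = 1 := by
  have h := γ.prop
  rw [Matrix.det_fin_two] at h
  unfold ga gb gc gd
  exact_mod_cast h

lemma jfac_ne_zero (γ : SL2R) {z : ℂ} (hz : z ∈ UH) : jfac γ z ≠ 0 := by
  intro h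
  have hzim : z.im ≠ 0 := ne_of_gt hz
  have him : (jfac γ z).im = ((γ : Matrix (Fin 2) (Fin 2) ℝ) 1 0) * z.im := by
    simp [jfac, gc, gd, Complex.add_im, Complex.mul_im]
  have hc : ((γ : Matrix (Fin 2) (Fin 2) ℝ) 1 0) = 0 := by
    have := him; rw [h] at this; simp at this; tauto
  have hd : gd γ = 0 := by
    have : jfac γ z = gd γ := by rw [jfac, gc, hc]; simp
    rw [← this, h]
  have := det_rel γ
  rw [hd, gc, hc] at this
  simp at this
lemma im_moeb (γ : SL2R) {z : ℂ} (hz : z ∈ UH) :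
    (moeb γ z).im = z.im / Complex.normSq (jfac γ z) := by
  have hdet := γ.prop
  rw [Matrix.det_fin_two] at hdet
  have hj := jfac_ne_zero γ hz
  have hns : Complex.normSq (jfac γ z) ≠ 0 := by
    simpa [Complex.normSq_eq_zero] using hj
  rw [moeb, Complex.div_im]
  rw [jfac] at hns ⊢
  unfold ga gb gc gd at *
  set a := ((γ : Matrix (Fin 2) (Fin 2) ℝ) 0 0) with ha
  set b := ((γ : Matrix (Fin 2) (Fin 2) ℝ) 0 1) with hb
  set c := ((γ : Matrix (Fin 2) (Fin 2) ℝ) 1 0) with hc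
  set d := ((γ : Matrix (Fin 2) (Fin 2) ℝ) 1 1) with hd
  rw [div_sub_div_same, div_eq_div_iff hns hns]
  simp only [Complex.add_im, Complex.add_re, Complex.mul_im, Complex.mul_re,
    Complex.ofReal_re, Complex.ofReal_im, Complex.normSq_apply]
  linear_combination (z.im * ((c*z.re+d)^2 + (c*z.im)^2)) * hdet

lemma moeb_mem_UH (γ : SL2R) {z : ℂ} (hz : z ∈ UH) : moeb γ z ∈ UH := by
  have hns : 0 < Complex.normSq (jfac γ z) := Complex.normSq_pos.mpr (jfac_ne_zero γ hz)
  have := im_moeb γ hz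
  simp only [UH, Set.mem_setOf_eq] at hz ⊢
  rw [this]
  positivity
lemma ga_mul (g h : SL2R) : ga (g*h) = ga g * ga h + gb g * gc h := by
  unfold ga gb gc
  rw [Matrix.SpecialLinearGroup.coe_mul, Matrix.mul_apply, Fin.sum_univ_two]
  push_cast; ring

lemma gb_mul (g h : SL2R) : gb (g*h) = ga g * gb h + gb g * gd h := by
  unfold ga gb gd
  rw [Matrix.SpecialLinearGroup.coe_mul, Matrix.mul_apply, Fin.sum_univ_two]
  push_cast; ring

lemma gc_mul (g h : SL2R) : gc (g*h) = gc g * ga h + gd g * gc h := by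
  unfold ga gc gd
  rw [Matrix.SpecialLinearGroup.coe_mul, Matrix.mul_apply, Fin.sum_univ_two]
  push_cast; ring

lemma gd_mul (g h : SL2R) : gd (g*h) = gc g * gb h + gd g * gd h := by
  unfold gb gc gd
  rw [Matrix.SpecialLinearGroup.coe_mul, Matrix.mul_apply, Fin.sum_univ_two]
  push_cast; ring

lemma moeb_one (z : ℂ) : moeb 1 z = z := by
  simp [moeb, ga, gb, gc, gd, Matrix.SpecialLinearGroup.coe_one, Matrix.one_apply]

lemma moeb_mul (g h : SL2R) {z : ℂ} (hz : z ∈ UH) : moeb (g*h) z = moeb g (moeb h z) := by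
  have h1 := jfac_ne_zero h hz
  have h2 := jfac_ne_zero g (moeb_mem_UH h hz)
  have h3 := jfac_ne_zero (g*h) hz
  rw [jfac] at h1 h3
  rw [jfac, moeb] at h2
  rw [gc_mul, gd_mul] at h3
  have h4 : gc g * (ga h * z + gb h) + gd g * (gc h * z + gd h) ≠ 0 := by
    intro h0; apply h3; linear_combination h0
  have e1 : moeb g (moeb h z) =
      (ga g * (ga h * z + gb h) + gb g * (gc h * z + gd h)) /
        (gc g * (ga h * z + gb h) + gd g * (gc h * z + gd h)) := by
    rw [moeb, moeb, div_eq_div_iff h2 h4]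
    rw [mul_comm (gc h) z] at h1
    field_simp
  rw [e1, moeb, ga_mul, gb_mul, gc_mul, gd_mul]
  rw [div_eq_div_iff (by intro h0; apply h3; linear_combination h0) h4]
  ring
lemma I_mem_UH : Complex.I ∈ UH := by simp [UH]

lemma orbitI_subset_UH (Γ : Subgroup SL2R) : OrbitI Γ ⊆ UH := by
  rintro w ⟨γ, _, rfl⟩
  exact moeb_mem_UH γ I_mem_UH

lemma moeb_mem_orbitI {Γ : Subgroup SL2R} {γ : SL2R} (hγ : γ ∈ Γ) {z : ℂ} (hz : z ∈ UH)
    (h : z ∈ OrbitI Γ) : moeb γ z ∈ OrbitI Γ := by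
  obtain ⟨δ, hδ, rfl⟩ := h
  exact ⟨γ * δ, mul_mem hγ hδ, (moeb_mul γ δ I_mem_UH).symm⟩

lemma moeb_not_mem_orbitI {Γ : Subgroup SL2R} {γ : SL2R} (hγ : γ ∈ Γ) {z : ℂ} (hz : z ∈ UH)
    (h : z ∉ OrbitI Γ) : moeb γ z ∉ OrbitI Γ := by
  intro hmem
  apply h
  have := moeb_mem_orbitI (inv_mem hγ) (moeb_mem_UH γ hz) hmem
  rwa [← moeb_mul _ _ hz, inv_mul_cancel, moeb_one] at this

open Filter Topology in
lemma hasDerivAt_moeb (γ : SL2R) {z : ℂ} (hz : z ∈ UH) :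
    HasDerivAt (moeb γ) (((jfac γ z)^2)⁻¹) z := by
  have hj := jfac_ne_zero γ hz
  have hn : HasDerivAt (fun w => ga γ * w + gb γ) (ga γ) z := by
    simpa using ((hasDerivAt_id z).const_mul (ga γ)).add_const (gb γ)
  have hd : HasDerivAt (fun w => gc γ * w + gd γ) (gc γ) z := by
    simpa using ((hasDerivAt_id z).const_mul (gc γ)).add_const (gd γ)
  have hdiv := hn.div hd (by rw [jfac] at hj; exact hj)
  have : moeb γ = fun w => (ga γ * w + gb γ) / (gc γ * w + gd γ) := by
    funext w; rw [moeb]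
  rw [this]
  refine hdiv.congr_deriv ?_
  have hnum : ga γ * (gc γ * z + gd γ) - (ga γ * z + gb γ) * gc γ = 1 := by
    linear_combination det_rel γ
  rw [hnum, jfac, one_div]
open Filter Topology in
lemma orbit_discrete (Γ : Subgroup SL2R) (hdisc : DiscreteTopology Γ)
    {z : ℂ} (hz : z ∈ UH) (hzo : z ∉ OrbitI Γ) :
    ∀ᶠ w in 𝓝 z, w ∈ UH ∧ w ∉ OrbitI Γ := by
  have hUHopen : IsOpen UH := isOpen_lt continuous_const Complex.continuous_im
  have hUH : ∀ᶠ w in 𝓝 z, w ∈ UH := hUHopen.mem_nhds hz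
  by_contra hcon
  have hfreq : ∃ᶠ w in 𝓝 z, w ∈ OrbitI Γ := by
    rw [Filter.not_eventually] at hcon
    refine hcon.mp (hUH.mono ?_)
    tauto
  obtain ⟨w, hw, hworb⟩ := Filter.exists_seq_forall_of_frequently hfreq
  choose γ hγΓ hwγ using fun n => (hworb n)
  -- bounds
  set y := z.im with hy
  have hy0 : 0 < y := hz
  have htim : Tendsto (fun n => (w n).im) atTop (𝓝 y) := (Complex.continuous_im.tendsto z).comp hw
  have htns : Tendsto (fun n => Complex.normSq (w n)) atTop (𝓝 (Complex.normSq z)) :=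
    (Complex.continuous_normSq.tendsto z).comp hw
  have hev1 : ∀ᶠ n in atTop, y / 2 < (w n).im := htim.eventually (eventually_gt_nhds (by linarith))
  have hev2 : ∀ᶠ n in atTop, Complex.normSq (w n) < Complex.normSq z + 1 :=
    htns.eventually (eventually_lt_nhds (by linarith))
  -- entry bounds
  have hevB : ∀ᶠ n in atTop, ∀ i j, ((γ n : Matrix (Fin 2) (Fin 2) ℝ) i j)^2 ≤ (Complex.normSq z + 1) * (2 / y) + 2 / y + 1 := by
    filter_upwards [hev1, hev2] with n h1 h2
    have hwim : (w n).im = 1 / Complex.normSq (jfac (γ n) Complex.I) := by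
      rw [hwγ n, im_moeb (γ n) I_mem_UH, Complex.I_im]
    have hjpos : 0 < Complex.normSq (jfac (γ n) Complex.I) :=
      Complex.normSq_pos.mpr (jfac_ne_zero (γ n) I_mem_UH)
    have hcd : Complex.normSq (jfac (γ n) Complex.I) =
        ((γ n : Matrix (Fin 2) (Fin 2) ℝ) 1 0)^2 + ((γ n : Matrix (Fin 2) (Fin 2) ℝ) 1 1)^2 := by
      simp [jfac, gc, gd, Complex.normSq_apply]
      ring
    have hcdle : Complex.normSq (jfac (γ n) Complex.I) ≤ 2 / y := by
      have h3 : y / 2 < 1 / Complex.normSq (jfac (γ n) Complex.I) := by rw [← hwim]; exact h1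
      rw [lt_div_iff₀ hjpos] at h3
      rw [le_div_iff₀ hy0]
      nlinarith
    have hnum : ga (γ n) * Complex.I + gb (γ n) = moeb (γ n) Complex.I * jfac (γ n) Complex.I := by
      rw [moeb, jfac, div_mul_cancel₀]
      exact jfac_ne_zero (γ n) I_mem_UH
    have hab : ((γ n : Matrix (Fin 2) (Fin 2) ℝ) 0 0)^2 + ((γ n : Matrix (Fin 2) (Fin 2) ℝ) 0 1)^2 =
        Complex.normSq (w n) * Complex.normSq (jfac (γ n) Complex.I) := by
      rw [hwγ n, ← Complex.normSq_mul, ← hnum]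
      simp [ga, gb, Complex.normSq_apply]
      ring
    have hable : ((γ n : Matrix (Fin 2) (Fin 2) ℝ) 0 0)^2 + ((γ n : Matrix (Fin 2) (Fin 2) ℝ) 0 1)^2
        ≤ (Complex.normSq z + 1) * (2 / y) := by
      rw [hab]
      have h0 : 0 ≤ Complex.normSq (w n) := Complex.normSq_nonneg _
      nlinarith
    have h2y : (0:ℝ) < 2 / y := div_pos (by norm_num) hy0
    have hprod : (0:ℝ) ≤ (Complex.normSq z + 1) * (2 / y) :=
      mul_nonneg (add_nonneg (Complex.normSq_nonneg z) zero_le_one) (le_of_lt h2y)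
    have hcd' : ((γ n : Matrix (Fin 2) (Fin 2) ℝ) 1 0)^2 + ((γ n : Matrix (Fin 2) (Fin 2) ℝ) 1 1)^2 ≤ 2 / y := hcd ▸ hcdle
    have q00 : ((γ n : Matrix (Fin 2) (Fin 2) ℝ) 0 0)^2 ≤ (Complex.normSq z + 1) * (2 / y) + 2 / y + 1 := by
      nlinarith [sq_nonneg ((γ n : Matrix (Fin 2) (Fin 2) ℝ) 0 1)]
    have q01 : ((γ n : Matrix (Fin 2) (Fin 2) ℝ) 0 1)^2 ≤ (Complex.normSq z + 1) * (2 / y) + 2 / y + 1 := by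
      nlinarith [sq_nonneg ((γ n : Matrix (Fin 2) (Fin 2) ℝ) 0 0)]
    have q10 : ((γ n : Matrix (Fin 2) (Fin 2) ℝ) 1 0)^2 ≤ (Complex.normSq z + 1) * (2 / y) + 2 / y + 1 := by
      nlinarith [sq_nonneg ((γ n : Matrix (Fin 2) (Fin 2) ℝ) 1 1)]
    have q11 : ((γ n : Matrix (Fin 2) (Fin 2) ℝ) 1 1)^2 ≤ (Complex.normSq z + 1) * (2 / y) + 2 / y + 1 := by
      nlinarith [sq_nonneg ((γ n : Matrix (Fin 2) (Fin 2) ℝ) 1 0)]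
    intro i j
    fin_cases i <;> fin_cases j <;> simp only [Fin.mk_zero, Fin.mk_one, Fin.isValue] <;> assumption
  obtain ⟨N, hN⟩ := Filter.eventually_atTop.mp hevB
  set R : ℝ := Real.sqrt ((Complex.normSq z + 1) * (2 / y) + 2 / y + 1) with hR
  set u : ℕ → Matrix (Fin 2) (Fin 2) ℝ := fun n => (γ (n + N) : Matrix (Fin 2) (Fin 2) ℝ) with hu
  have hmemS : ∀ n, u n ∈ {A : Matrix (Fin 2) (Fin 2) ℝ | ∀ i j, A i j ∈ Set.Icc (-R) R} := by
    intro n i j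
    have h := hN (n + N) (Nat.le_add_left N n) i j
    have habs : |u n i j| ≤ R := by
      rw [hR, ← Real.sqrt_sq_eq_abs]
      exact Real.sqrt_le_sqrt h
    exact ⟨neg_le_of_abs_le habs, le_of_abs_le habs⟩
  have hScpt : IsCompact {A : Matrix (Fin 2) (Fin 2) ℝ | ∀ i j, A i j ∈ Set.Icc (-R) R} := by
    have hset : {A : Matrix (Fin 2) (Fin 2) ℝ | ∀ i j, A i j ∈ Set.Icc (-R) R} =
        (Set.pi Set.univ (fun _ : Fin 2 =>
          Set.pi Set.univ (fun _ : Fin 2 => Set.Icc (-R) R)) : Set (Matrix (Fin 2) (Fin 2) ℝ)) := by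
      ext A
      exact ⟨fun h i _ j _ => h i j, fun h i j => h i (Set.mem_univ i) j (Set.mem_univ j)⟩
    rw [hset]
    exact isCompact_univ_pi (fun _ => isCompact_univ_pi (fun _ => isCompact_Icc))
  haveI : FirstCountableTopology (Matrix (Fin 2) (Fin 2) ℝ) :=
    inferInstanceAs (FirstCountableTopology (Fin 2 → Fin 2 → ℝ))
  obtain ⟨A, hAS, ψ, hψmono, hψtend⟩ := hScpt.tendsto_subseq hmemS
  have hdetA : A.det = 1 := by
    have h1 : Tendsto (fun n => (u (ψ n)).det) atTop (𝓝 A.det) :=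
      ((Continuous.matrix_det continuous_id).tendsto A).comp hψtend
    have h2 : (fun n => (u (ψ n)).det) = fun _ => (1:ℝ) := by
      funext n; exact (γ (ψ n + N)).prop
    rw [h2] at h1
    exact tendsto_nhds_unique h1 tendsto_const_nhds
  have hmul : Tendsto (fun n => u (ψ (n+1)) * (u (ψ n)).adjugate) atTop (𝓝 (A * A.adjugate)) := by
    have t1 : Tendsto (fun n => u (ψ (n+1))) atTop (𝓝 A) :=
      hψtend.comp (tendsto_add_atTop_nat 1)
    have t2 : Tendsto (fun n => (u (ψ n)).adjugate) atTop (𝓝 A.adjugate) :=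
      ((Continuous.matrix_adjugate continuous_id).tendsto A).comp hψtend
    exact t1.mul t2
  have hlim1 : A * A.adjugate = 1 := by rw [Matrix.mul_adjugate, hdetA, one_smul]
  rw [hlim1] at hmul
  have hopen1 : IsOpen ({1} : Set Γ) := isOpen_discrete _
  obtain ⟨U, hUopen, hUpre⟩ := isOpen_induced_iff.mp hopen1
  obtain ⟨V, hVopen, hVpre⟩ := isOpen_induced_iff.mp hUopen
  have h1V : (1 : Matrix (Fin 2) (Fin 2) ℝ) ∈ V := by
    have h0 : (1 : Γ) ∈ ({1} : Set Γ) := rfl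
    rw [← hUpre] at h0
    rw [← hVpre] at h0
    simpa using h0
  have heq1 : ∀ᶠ n in atTop, γ (ψ (n+1) + N) = γ (ψ n + N) := by
    have hmem : ∀ᶠ n in atTop, u (ψ (n+1)) * (u (ψ n)).adjugate ∈ V :=
      hmul.eventually_mem (hVopen.mem_nhds h1V)
    filter_upwards [hmem] with n hn
    set δ : SL2R := γ (ψ (n+1) + N) * (γ (ψ n + N))⁻¹ with hδ
    have hδΓ : δ ∈ Γ := mul_mem (hγΓ _) (inv_mem (hγΓ _))
    have hδmat : (δ : Matrix (Fin 2) (Fin 2) ℝ) = u (ψ (n+1)) * (u (ψ n)).adjugate := by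
      rw [hδ, Matrix.SpecialLinearGroup.coe_mul, Matrix.SpecialLinearGroup.coe_inv]
    have hδV : (δ : Matrix (Fin 2) (Fin 2) ℝ) ∈ V := hδmat ▸ hn
    have hδU : δ ∈ U := by rw [← hVpre]; exact hδV
    have : (⟨δ, hδΓ⟩ : Γ) ∈ ({1} : Set Γ) := by rw [← hUpre]; exact hδU
    have hδ1 : δ = 1 := congrArg Subtype.val (Set.mem_singleton_iff.mp this)
    rw [hδ] at hδ1
    exact mul_inv_eq_one.mp hδ1
  obtain ⟨N₁, hN₁⟩ := Filter.eventually_atTop.mp heq1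
  have hconst : ∀ n, N₁ ≤ n → γ (ψ n + N) = γ (ψ N₁ + N) := by
    intro n hn
    induction n, hn using Nat.le_induction with
    | base => rfl
    | succ n hn ih => rw [hN₁ n hn, ih]
  have htend2 : Tendsto (fun n => w (ψ n + N)) atTop (𝓝 z) := by
    refine hw.comp (tendsto_atTop_mono (fun n => ?_) tendsto_id)
    exact le_trans (hψmono.le_apply) (Nat.le_add_right _ N)
  have hev : ∀ᶠ n in atTop, w (ψ n + N) = w (ψ N₁ + N) := by
    filter_upwards [Filter.eventually_ge_atTop N₁] with n hn
    rw [hwγ, hwγ, hconst n hn]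
  have hzval : w (ψ N₁ + N) = z :=
    (tendsto_nhds_unique (Filter.Tendsto.congr' hev htend2) tendsto_const_nhds).symm
  exact hzo (hzval ▸ hworb (ψ N₁ + N))
open Filter Topology in
lemma meromorphicAt_deriv {f : ℂ → ℂ} {z : ℂ} (hf : MeromorphicAt f z) :
    MeromorphicAt (deriv f) z := by
  obtain ⟨n, hn⟩ := hf
  simp only [smul_eq_mul] at hn
  have hg : AnalyticAt ℂ (fun w => (w - z) ^ (n+1) * f w) z := by
    have h1 : AnalyticAt ℂ (fun w => (w - z) * ((w - z) ^ n * f w)) z :=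
      (analyticAt_id.sub analyticAt_const).mul hn
    refine h1.congr ?_
    filter_upwards with w
    rw [pow_succ]; ring
  set g : ℂ → ℂ := fun w => (w - z) ^ (n+1) * f w with hgdef
  obtain ⟨s, hsn, hgs⟩ := hg.exists_mem_nhds_analyticOnNhd
  obtain ⟨t, hts, htopen, hzt⟩ := mem_nhds_iff.mp hsn
  refine ⟨n + 3, ?_⟩
  simp only [smul_eq_mul]
  have hq : AnalyticAt ℂ
      (fun w => (w - z) * ((w - z) * deriv g w - ((n:ℂ)+1) * g w)) z := by
    exact (analyticAt_id.sub analyticAt_const).mul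
      (((analyticAt_id.sub analyticAt_const).mul (aderiv hg)).sub (analyticAt_const.mul hg))
  refine hq.congr ?_
  rw [Filter.eventuallyEq_iff_exists_mem]
  refine ⟨t, htopen.mem_nhds hzt, fun w hw => ?_⟩
  by_cases hwz : w = z
  · subst hwz; simp
  · have ha : w - z ≠ 0 := sub_ne_zero.mpr hwz
    have hfF : f =ᶠ[𝓝 w] fun u => g u / (u - z) ^ (n+1) := by
      filter_upwards [isOpen_compl_singleton.mem_nhds (hwz : w ∈ ({z}ᶜ : Set ℂ))] with u hu
      have hu' : u - z ≠ 0 := sub_ne_zero.mpr hu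
      rw [hgdef]
      field_simp
    have hgw : AnalyticAt ℂ g w := hgs w (hts hw)
    have hd1 : HasDerivAt g (deriv g w) w := hgw.differentiableAt.hasDerivAt
    have hd2 : HasDerivAt (fun u => (u - z)^(n+1)) (((n:ℂ)+1) * (w - z)^n) w := by
      have h2 := ((hasDerivAt_id w).sub_const z).pow (n+1)
      refine h2.congr_deriv (by simp)
    have hF : HasDerivAt (fun u => g u / (u - z)^(n+1))
        ((deriv g w * (w - z)^(n+1) - g w * (((n:ℂ)+1) * (w - z)^n)) / ((w - z)^(n+1))^2) w :=
      hd1.div hd2 (pow_ne_zero _ ha)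
    have hderiv : deriv f w =
        (deriv g w * (w - z)^(n+1) - g w * (((n:ℂ)+1) * (w - z)^n)) / ((w - z)^(n+1))^2 := by
      rw [hfF.deriv_eq, hF.deriv]
    show (w - z) * ((w - z) * deriv g w - ((n:ℂ)+1) * g w) = (w - z)^(n+3) * deriv f w
    rw [hderiv]
    field_simp
    ring

open Filter Topology in
lemma simplePole_meromorphicAt {φ : ℂ → ℂ} {z : ℂ} (h : SimplePoleAtMost φ z) :
    MeromorphicAt φ z := by
  obtain ⟨g, hg, heq⟩ := h
  refine ⟨2, ?_⟩
  simp only [smul_eq_mul]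
  have hq : AnalyticAt ℂ (fun w => (w - z) * g w) z := (analyticAt_id.sub analyticAt_const).mul hg
  refine hq.congr ?_
  rw [Filter.EventuallyEq, ← nhdsNE_sup_pure, Filter.eventually_sup]
  constructor
  · filter_upwards [heq, self_mem_nhdsWithin] with w hφ hw
    have hwz : w - z ≠ 0 := sub_ne_zero.mpr hw
    rw [hφ]
    field_simp
  · simp
open Filter Topology in
lemma transform_law (Γ : Subgroup SL2R) (hdisc : DiscreteTopology Γ) (φ : ℂ → ℂ)
    (hφmod : ∀ γ ∈ Γ, ∀ z ∈ UH, z ∉ OrbitI Γ →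
      φ (moeb γ z) = jfac γ z ^ 2 * φ z + gc γ * jfac γ z)
    (k : ℤ) (f : ℂ → ℂ)
    (hfhol : ∀ z ∈ UH, z ∉ OrbitI Γ → AnalyticAt ℂ f z)
    (hfmod : ∀ γ ∈ Γ, ∀ z ∈ UH, z ∉ OrbitI Γ → f (moeb γ z) = jfac γ z ^ k * f z)
    {γ : SL2R} (hγ : γ ∈ Γ) {z : ℂ} (hz : z ∈ UH) (hzo : z ∉ OrbitI Γ) :
    deriv f (moeb γ z) - (k : ℂ) * φ (moeb γ z) * f (moeb γ z) =
      jfac γ z ^ (k + 2) * (deriv f z - (k : ℂ) * φ z * f z) := by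
  have hj := jfac_ne_zero γ hz
  have hUHz : moeb γ z ∈ UH := moeb_mem_UH γ hz
  have hoz : moeb γ z ∉ OrbitI Γ := moeb_not_mem_orbitI hγ hz hzo
  have hfz : AnalyticAt ℂ f z := hfhol z hz hzo
  have hfγz : AnalyticAt ℂ f (moeb γ z) := hfhol _ hUHz hoz
  have hloc : (fun w => f (moeb γ w)) =ᶠ[𝓝 z] fun w => jfac γ w ^ k * f w := by
    filter_upwards [orbit_discrete Γ hdisc hz hzo] with w hw
    exact hfmod γ hγ w hw.1 hw.2
  have hmoeb := hasDerivAt_moeb γ hz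
  have hcomp : HasDerivAt (fun w => f (moeb γ w))
      (deriv f (moeb γ z) * ((jfac γ z ^ 2)⁻¹)) z :=
    (hfγz.differentiableAt.hasDerivAt).comp z hmoeb
  have hjlin : HasDerivAt (fun w => jfac γ w) (gc γ) z := by
    have h1 := ((hasDerivAt_id z).const_mul (gc γ)).add_const (gd γ)
    simpa [jfac, mul_comm] using h1
  have hpow : HasDerivAt (fun w => jfac γ w ^ k) ((k:ℂ) * jfac γ z ^ (k-1) * gc γ) z := by
    have h1 := (hasDerivAt_zpow k (jfac γ z) (Or.inl hj)).comp z hjlin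
    exact h1
  have hrhs : HasDerivAt (fun w => jfac γ w ^ k * f w)
      ((k:ℂ) * jfac γ z ^ (k-1) * gc γ * f z + jfac γ z ^ k * deriv f z) z :=
    hpow.mul (hfz.differentiableAt.hasDerivAt)
  have hrhs' : HasDerivAt (fun w => f (moeb γ w))
      ((k:ℂ) * jfac γ z ^ (k-1) * gc γ * f z + jfac γ z ^ k * deriv f z) z :=
    hrhs.congr_of_eventuallyEq hloc
  have heq : deriv f (moeb γ z) * ((jfac γ z ^ 2)⁻¹) =
      (k:ℂ) * jfac γ z ^ (k-1) * gc γ * f z + jfac γ z ^ k * deriv f z :=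
    hcomp.unique hrhs'
  have hD : deriv f (moeb γ z) =
      jfac γ z ^ 2 * ((k:ℂ) * jfac γ z ^ (k-1) * gc γ * f z + jfac γ z ^ k * deriv f z) := by
    rw [← heq]
    field_simp
  rw [hD, hφmod γ hγ z hz hzo, hfmod γ hγ z hz hzo]
  have ek1 : jfac γ z ^ (k-1) = jfac γ z ^ k * (jfac γ z)⁻¹ := zpow_sub_one₀ hj k
  have ek2 : jfac γ z ^ (k+2) = jfac γ z ^ k * jfac γ z ^ (2:ℕ) := by
    rw [zpow_add₀ hj]; congr 1
  rw [ek1, ek2]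
  field_simp
  ring
open Filter Topology in
lemma order_le_aux {p q : ℤ} {G g₂ : ℂ → ℂ} {z₀ : ℂ} (hG : ContinuousAt G z₀)
    (hg₂ : ContinuousAt g₂ z₀) (hq : g₂ z₀ ≠ 0)
    (heq : ∀ᶠ w in 𝓝[≠] z₀, (w - z₀) ^ p * G w = (w - z₀) ^ q * g₂ w) :
    p ≤ q ∧ (G z₀ = 0 → p < q) := by
  have hGt : Tendsto G (𝓝[≠] z₀) (𝓝 (G z₀)) := hG.tendsto.mono_left nhdsWithin_le_nhds
  have hg₂t : Tendsto g₂ (𝓝[≠] z₀) (𝓝 (g₂ z₀)) := hg₂.tendsto.mono_left nhdsWithin_le_nhds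
  have key : ∀ r : ℤ, 0 < r → (∀ᶠ w in 𝓝[≠] z₀, g₂ w = (w - z₀) ^ r * G w) → False := by
    intro r hr hev
    have h1 : Tendsto (fun w : ℂ => (w - z₀) ^ r) (𝓝[≠] z₀) (𝓝 0) := by
      have hc : ContinuousAt (fun w : ℂ => (w - z₀) ^ r.toNat) z₀ := by fun_prop
      have h2 := hc.tendsto.mono_left (nhdsWithin_le_nhds (s := ({z₀}ᶜ : Set ℂ)))
      have hv : ((z₀ - z₀) ^ r.toNat : ℂ) = 0 := by
        rw [sub_self]; exact zero_pow (by omega)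
      rw [hv] at h2
      refine h2.congr' ?_
      filter_upwards [self_mem_nhdsWithin] with w hw
      rw [← zpow_natCast, Int.toNat_of_nonneg (le_of_lt hr)]
    have ht0 : Tendsto (fun w => (w - z₀) ^ r * G w) (𝓝[≠] z₀) (𝓝 0) := by
      simpa using h1.mul hGt
    have hzero : g₂ z₀ = 0 :=
      tendsto_nhds_unique hg₂t (ht0.congr' (hev.mono fun _ hw => hw.symm))
    exact hq hzero
  have hple : p ≤ q := by
    by_contra hpq
    push_neg at hpq
    apply key (p - q) (by omega)
    filter_upwards [heq, self_mem_nhdsWithin] with w hw hmem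
    have ha : w - z₀ ≠ 0 := sub_ne_zero.mpr hmem
    rw [zpow_sub₀ ha, div_mul_eq_mul_div, hw]
    exact (mul_div_cancel_left₀ _ (zpow_ne_zero _ ha)).symm
  refine ⟨hple, fun hG0 => ?_⟩
  rcases lt_or_eq_of_le hple with h | h
  · exact h
  · exfalso
    have hev : G =ᶠ[𝓝[≠] z₀] g₂ := by
      filter_upwards [heq, self_mem_nhdsWithin] with w hw hmem
      have ha : w - z₀ ≠ 0 := sub_ne_zero.mpr hmem
      rw [h] at hw
      exact mul_left_cancel₀ (zpow_ne_zero _ ha) hw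
    have hGg : G z₀ = g₂ z₀ := tendsto_nhds_unique (hGt.congr' hev) hg₂t
    exact hq (by rw [← hGg, hG0])

open Filter Topology in
lemma orderAt_D {φ h f g : ℂ → ℂ} {K : ℝ} {k m : ℤ}
    (hh : AnalyticAt ℂ h Complex.I) (hhI : h Complex.I = (K:ℂ))
    (hφeq : ∀ᶠ w in 𝓝[≠] Complex.I, φ w = h w / (w - Complex.I))
    (hg : AnalyticAt ℂ g Complex.I) (hgI : g Complex.I ≠ 0)
    (hfeq : ∀ᶠ w in 𝓝[≠] Complex.I, f w = (w - Complex.I) ^ m * g w) :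
    ∃ G : ℂ → ℂ, AnalyticAt ℂ G Complex.I ∧
      G Complex.I = ((m : ℂ) - (k:ℂ) * K) * g Complex.I ∧
      ∀ᶠ w in 𝓝[≠] Complex.I, deriv f w - (k:ℂ) * φ w * f w =
        (w - Complex.I) ^ (m-1) * G w := by
  refine ⟨fun w => (m:ℂ) * g w + (w - Complex.I) * deriv g w - (k:ℂ) * h w * g w,
    ((analyticAt_const.mul hg).add ((analyticAt_id.sub analyticAt_const).mul (aderiv hg))).sub
      ((analyticAt_const.mul hh).mul hg), by simp [hhI]; ring, ?_⟩
  -- open set where g is analytic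
  obtain ⟨s, hsn, hgs⟩ := hg.exists_mem_nhds_analyticOnNhd
  obtain ⟨t, hts, htopen, hIt⟩ := mem_nhds_iff.mp hsn
  -- set where f equals its local form, as a nhds-within membership
  obtain ⟨Ef, hEf, hEfsub⟩ := Filter.eventually_iff_exists_mem.mp hfeq
  obtain ⟨Tf, hTf, hTfsub⟩ := mem_nhdsWithin_iff_exists_mem_nhds_inter.mp hEf
  obtain ⟨tf, htfs, htfopen, hItf⟩ := mem_nhds_iff.mp hTf
  have hmemt : ∀ᶠ w in 𝓝[≠] Complex.I, w ∈ t ∩ tf :=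
    mem_nhdsWithin_of_mem_nhds ((htopen.inter htfopen).mem_nhds ⟨hIt, hItf⟩)
  filter_upwards [hφeq, hfeq, hmemt, self_mem_nhdsWithin] with w hφw hfw hwt hwI
  have ha : w - Complex.I ≠ 0 := sub_ne_zero.mpr hwI
  -- compute deriv f w
  have hfF : f =ᶠ[𝓝 w] fun u => (u - Complex.I) ^ m * g u := by
    have hopen : IsOpen (tf ∩ {Complex.I}ᶜ) := htfopen.inter isOpen_compl_singleton
    filter_upwards [hopen.mem_nhds ⟨hwt.2, hwI⟩] with u hu
    exact hEfsub u (hTfsub ⟨htfs hu.1, hu.2⟩)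
  have hgw : AnalyticAt ℂ g w := hgs w (hts hwt.1)
  have hzp : HasDerivAt (fun u : ℂ => (u - Complex.I) ^ m) ((m:ℂ) * (w - Complex.I) ^ (m-1)) w := by
    have h1 := (hasDerivAt_zpow m (w - Complex.I) (Or.inl ha)).comp w
      ((hasDerivAt_id w).sub_const Complex.I)
    exact h1.congr_deriv (mul_one _)
  have hF : HasDerivAt (fun u => (u - Complex.I) ^ m * g u)
      ((m:ℂ) * (w - Complex.I) ^ (m-1) * g w + (w - Complex.I) ^ m * deriv g w) w :=
    hzp.mul hgw.differentiableAt.hasDerivAt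
  have hderiv : deriv f w =
      (m:ℂ) * (w - Complex.I) ^ (m-1) * g w + (w - Complex.I) ^ m * deriv g w := by
    rw [hfF.deriv_eq, hF.deriv]
  have hGw : deriv f w - (k:ℂ) * φ w * f w =
      (m:ℂ) * (w - Complex.I) ^ (m-1) * g w + (w - Complex.I) ^ m * deriv g w
        - (k:ℂ) * (h w / (w - Complex.I)) * ((w - Complex.I) ^ m * g w) := by
    rw [hderiv, hφw, hfw]
  rw [hGw]
  show _ = (w - Complex.I) ^ (m-1) *
      ((m:ℂ) * g w + (w - Complex.I) * deriv g w - (k:ℂ) * h w * g w)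
  have em : (w - Complex.I) ^ m = (w - Complex.I) ^ (m-1) * (w - Complex.I) := by
    rw [zpow_sub_one₀ ha]
    field_simp
  rw [em]
  field_simp
/-- Let `Γ` be discrete and cocompact, `φ` a meromorphic quasimodular
form of weight `2` with `δφ = 1`, holomorphic outside the `Γ`-orbit of `i`, with a
simple pole at `i` of residue `𝒦 ≠ 0`.  For `f` a meromorphic modular form of weight
`k` over `Γ` with poles in the `Γ`-orbit of `i`, `D_φ f = f' - k φ f` is a meromorphic
modular form of weight `k + 2` with poles only in the `Γ`-orbit of `i`, and
`ord_i(D_φ f) ≥ ord_i(f) - 1`, with equality if and only if `ord_i(f) ≠ k·𝒦`. -/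
theorem statement17 (Γ : Subgroup SL2R) (hdisc : DiscreteTopology Γ)
    (hcc : Cocompact Γ) (φ : ℂ → ℂ) (K : ℝ) (hK : K ≠ 0)
    (hφhol : ∀ z ∈ UH, z ∉ OrbitI Γ → AnalyticAt ℂ φ z)
    (hφpole : ∀ z ∈ OrbitI Γ, SimplePoleAtMost φ z)
    (hφres : ∃ g : ℂ → ℂ, AnalyticAt ℂ g Complex.I ∧ g Complex.I = (K : ℂ) ∧
      ∀ᶠ w in nhdsWithin Complex.I {Complex.I}ᶜ, φ w = g w / (w - Complex.I))
    (hφmod : ∀ γ ∈ Γ, ∀ z ∈ UH, z ∉ OrbitI Γ →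
      φ (moeb γ z) = jfac γ z ^ 2 * φ z + gc γ * jfac γ z)
    (k : ℤ) (f : ℂ → ℂ)
    (hfmero : ∀ z ∈ UH, MeromorphicAt f z)
    (hfhol : ∀ z ∈ UH, z ∉ OrbitI Γ → AnalyticAt ℂ f z)
    (hfmod : ∀ γ ∈ Γ, ∀ z ∈ UH, z ∉ OrbitI Γ →
      f (moeb γ z) = jfac γ z ^ k * f z) :
    (∀ z ∈ UH, MeromorphicAt (fun w => deriv f w - (k : ℂ) * φ w * f w) z) ∧
    (∀ z ∈ UH, z ∉ OrbitI Γ →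
      AnalyticAt ℂ (fun w => deriv f w - (k : ℂ) * φ w * f w) z) ∧
    (∀ γ ∈ Γ, ∀ z ∈ UH, z ∉ OrbitI Γ →
      deriv f (moeb γ z) - (k : ℂ) * φ (moeb γ z) * f (moeb γ z) =
        jfac γ z ^ (k + 2) * (deriv f z - (k : ℂ) * φ z * f z)) ∧
    (∀ m : ℤ, OrderAt f Complex.I m →
      (∀ m' : ℤ, OrderAt (fun w => deriv f w - (k : ℂ) * φ w * f w) Complex.I m' →
        m - 1 ≤ m') ∧
      ((m : ℝ) ≠ (k : ℝ) * K →
        OrderAt (fun w => deriv f w - (k : ℂ) * φ w * f w) Complex.I (m - 1)) ∧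
      ((m : ℝ) = (k : ℝ) * K →
        ∀ m' : ℤ, OrderAt (fun w => deriv f w - (k : ℂ) * φ w * f w) Complex.I m' →
          m - 1 < m')) := by
  obtain ⟨h, hh, hhI, hφeq⟩ := hφres
  refine ⟨?_, ?_, ?_, ?_⟩
  · intro z hz
    by_cases hzo : z ∈ OrbitI Γ
    · exact (meromorphicAt_deriv (hfmero z hz)).sub
        (((MeromorphicAt.const _ z).mul (simplePole_meromorphicAt (hφpole z hzo))).mul
          (hfmero z hz))
    · exact ((aderiv (hfhol z hz hzo)).sub
        ((analyticAt_const.mul (hφhol z hz hzo)).mul (hfhol z hz hzo))).meromorphicAt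
  · intro z hz hzo
    exact (aderiv (hfhol z hz hzo)).sub
      ((analyticAt_const.mul (hφhol z hz hzo)).mul (hfhol z hz hzo))
  · intro γ hγ z hz hzo
    exact transform_law Γ hdisc φ hφmod k f hfhol hfmod hγ hz hzo
  · intro m hm
    obtain ⟨g, hg, hgI, hfeq⟩ := hm
    obtain ⟨G, hGa, hGI, hDeq⟩ := orderAt_D (k := k) (m := m) hh hhI hφeq hg hgI hfeq
    have hcast : ((m:ℂ) - (k:ℂ) * (K:ℂ)) = (((m:ℝ) - (k:ℝ) * K : ℝ) : ℂ) := by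
      push_cast; ring
    refine ⟨?_, ?_, ?_⟩
    · intro m' hm'
      obtain ⟨g₂, hg₂, hg₂0, hDeq₂⟩ := hm'
      have heq' : ∀ᶠ w in nhdsWithin Complex.I {Complex.I}ᶜ,
          (w - Complex.I) ^ (m-1) * G w = (w - Complex.I) ^ m' * g₂ w := by
        filter_upwards [hDeq, hDeq₂] with w h1 h2
        rw [← h1, ← h2]
      exact (order_le_aux hGa.continuousAt hg₂.continuousAt hg₂0 heq').1
    · intro hne
      refine ⟨G, hGa, ?_, hDeq⟩
      rw [hGI]
      refine mul_ne_zero ?_ hgI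
      rw [hcast]
      exact Complex.ofReal_ne_zero.mpr (sub_ne_zero.mpr hne)
    · intro hKeq m' hm'
      obtain ⟨g₂, hg₂, hg₂0, hDeq₂⟩ := hm'
      have heq' : ∀ᶠ w in nhdsWithin Complex.I {Complex.I}ᶜ,
          (w - Complex.I) ^ (m-1) * G w = (w - Complex.I) ^ m' * g₂ w := by
        filter_upwards [hDeq, hDeq₂] with w h1 h2
        rw [← h1, ← h2]
      have hG0 : G Complex.I = 0 := by
        rw [hGI, hcast]
        rw [show ((m:ℝ) - (k:ℝ) * K : ℝ) = 0 by rw [hKeq]; ring]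
        simp
      exact (order_le_aux hGa.continuousAt hg₂.continuousAt hg₂0 heq').2 hG0

end Quasimodular
end
end

section
/- Let G be a finitely generated additive subsemigroup of ℝ² such that the subgroup Λ of ℝ² generated by G is a lattice of rank 2. Suppose there exist P, Q ∈ G, linearly independent over ℝ, such that every element of G is a nonnegative real linear combination of P and Q, and let S = { s·P + t·Q : s, t ∈ ℝ, s ≥ 0, t ≥ 0 } be the convex sector generated by G. Then there exists A ∈ S such that (A + S) ∩ Λ ⊆ G. -/
open Finset

noncomputable section

/-- Let `G` be a finitely generated additive subsemigroup of `ℝ²`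
(with generators `Pgen i`) whose generated subgroup `Λ` is a lattice of rank `2`
(generated by two linearly independent vectors `u, v`).  Suppose `P, Q ∈ G` are
linearly independent and every element of `G` is a nonnegative real combination of
`P` and `Q`, and let `S = {sP + tQ : s, t ≥ 0}` be the convex sector generated by `G`.
Then there exists `A ∈ S` with `(A + S) ∩ Λ ⊆ G`. -/
theorem statement18 (G : Set (ℝ × ℝ)) (m : ℕ) (Pgen : Fin m → ℝ × ℝ)
    (hgen : ∀ x, x ∈ G ↔ ∃ e : Fin m → ℕ, e ≠ 0 ∧ x = ∑ i, (e i : ℝ) • Pgen i)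
    (u v : ℝ × ℝ) (huv : LinearIndependent ℝ ![u, v])
    (hlat : AddSubgroup.closure G = AddSubgroup.closure {u, v})
    (P Q : ℝ × ℝ) (hP : P ∈ G) (hQ : Q ∈ G)
    (hPQ : LinearIndependent ℝ ![P, Q])
    (hcone : ∀ x ∈ G, ∃ s t : ℝ, 0 ≤ s ∧ 0 ≤ t ∧ x = s • P + t • Q) :
    ∃ A : ℝ × ℝ, (∃ s t : ℝ, 0 ≤ s ∧ 0 ≤ t ∧ A = s • P + t • Q) ∧
      ∀ B : ℝ × ℝ, (∃ s t : ℝ, 0 ≤ s ∧ 0 ≤ t ∧ B = s • P + t • Q) →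
        A + B ∈ AddSubgroup.closure G → A + B ∈ G := by
  classical
  have hPQ' := LinearIndependent.pair_iff.mp hPQ
  -- determinant of P, Q
  set Δ : ℝ := P.1 * Q.2 - P.2 * Q.1 with hΔdef
  have hΔ : Δ ≠ 0 := by
    intro h0
    have e1 : Q.2 • P + (-P.2) • Q = 0 := by
      apply Prod.ext <;> simp [smul_eq_mul] <;> nlinarith [h0]
    have e2 : Q.1 • P + (-P.1) • Q = 0 := by
      apply Prod.ext <;> simp [smul_eq_mul] <;> nlinarith [h0]
    obtain ⟨h1, h2⟩ := hPQ' _ _ e1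
    obtain ⟨h3, h4⟩ := hPQ' _ _ e2
    have hP0 : P = 0 := by
      apply Prod.ext
      · simpa using neg_eq_zero.mp h4
      · simpa using neg_eq_zero.mp h2
    exact one_ne_zero ((hPQ' 1 0 (by simp [hP0])).1)
  -- coordinates with respect to P, Q
  set cp : ℝ × ℝ → ℝ := fun w => (w.1 * Q.2 - w.2 * Q.1) / Δ with hcpdef
  set cq : ℝ × ℝ → ℝ := fun w => (P.1 * w.2 - P.2 * w.1) / Δ with hcqdef
  have hexp : ∀ w : ℝ × ℝ, w = cp w • P + cq w • Q := by
    intro w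
    apply Prod.ext <;> simp only [hcpdef, hcqdef, Prod.fst_add, Prod.snd_add, Prod.smul_fst,
      Prod.smul_snd, smul_eq_mul] <;> field_simp <;> ring
  have hcp : ∀ s t : ℝ, cp (s • P + t • Q) = s := by
    intro s t
    simp only [hcpdef, Prod.fst_add, Prod.snd_add, Prod.smul_fst, Prod.smul_snd, smul_eq_mul]
    field_simp; ring
  have hcq : ∀ s t : ℝ, cq (s • P + t • Q) = t := by
    intro s t
    simp only [hcqdef, Prod.fst_add, Prod.snd_add, Prod.smul_fst, Prod.smul_snd, smul_eq_mul]
    field_simp; ring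
  -- G is closed under addition
  have hGadd : ∀ x ∈ G, ∀ y ∈ G, x + y ∈ G := by
    intro x hx y hy
    rw [hgen] at hx hy ⊢
    obtain ⟨e, he, rfl⟩ := hx
    obtain ⟨f, hf, rfl⟩ := hy
    refine ⟨e + f, ?_, ?_⟩
    · intro h
      apply he
      funext i
      have := congrFun h i
      simp only [Pi.add_apply, Pi.zero_apply, Nat.add_eq_zero] at this
      simp [this.1]
    · rw [← Finset.sum_add_distrib]
      refine Finset.sum_congr rfl fun i _ => ?_
      simp only [Pi.add_apply]
      push_cast
      rw [add_smul]
  -- positive multiples of elements stay in G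
  have hGsmul : ∀ g ∈ G, ∀ k : ℕ, 0 < k → k • g ∈ G := by
    intro g hg k hk
    induction k with
    | zero => omega
    | succ k ih =>
      rcases Nat.eq_zero_or_pos k with hk0 | hk0
      · simpa [hk0] using hg
      · rw [succ_nsmul]
        exact hGadd _ (ih hk0) _ hg
  -- adding natural multiples of P (resp. Q)
  have hGP : ∀ w ∈ G, ∀ k : ℕ, w + (k : ℝ) • P ∈ G := by
    intro w hw k
    induction k with
    | zero => simpa using hw
    | succ k ih =>
      have : w + ((k : ℝ) + 1) • P = (w + (k : ℝ) • P) + P := by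
        rw [add_smul, one_smul, add_assoc]
      push_cast
      rw [this]
      exact hGadd _ ih _ hP
  have hGQ : ∀ w ∈ G, ∀ k : ℕ, w + (k : ℝ) • Q ∈ G := by
    intro w hw k
    induction k with
    | zero => simpa using hw
    | succ k ih =>
      have : w + ((k : ℝ) + 1) • Q = (w + (k : ℝ) • Q) + Q := by
        rw [add_smul, one_smul, add_assoc]
      push_cast
      rw [this]
      exact hGadd _ ih _ hQ
  -- G sits inside the lattice
  have hGL : ∀ g ∈ G, g ∈ AddSubgroup.closure ({u, v} : Set (ℝ × ℝ)) := by
    intro g hg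
    rw [← hlat]
    exact AddSubgroup.subset_closure hg
  -- express P, Q in terms of u, v
  obtain ⟨p₁, p₂, hPuv0⟩ := AddSubgroup.mem_closure_pair.mp (hGL P hP)
  obtain ⟨q₁, q₂, hQuv0⟩ := AddSubgroup.mem_closure_pair.mp (hGL Q hQ)
  have hPuv : P = (p₁ : ℝ) • u + (p₂ : ℝ) • v := by
    rw [← hPuv0]; push_cast [Int.cast_smul_eq_zsmul]; module
  have hQuv : Q = (q₁ : ℝ) • u + (q₂ : ℝ) • v := by
    rw [← hQuv0]; push_cast [Int.cast_smul_eq_zsmul]; module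
  set d : ℤ := p₁ * q₂ - p₂ * q₁ with hddef
  have hd : d ≠ 0 := by
    intro h0
    have key1 : (q₂ : ℝ) • P + (-(p₂ : ℝ)) • Q = ((p₁ * q₂ - p₂ * q₁ : ℤ) : ℝ) • u := by
      rw [hPuv, hQuv]; push_cast; module
    have key2 : (q₁ : ℝ) • P + (-(p₁ : ℝ)) • Q = (-((p₁ * q₂ - p₂ * q₁ : ℤ) : ℝ)) • v := by
      rw [hPuv, hQuv]; push_cast; module
    rw [← hddef, h0] at key1 key2
    simp only [Int.cast_zero, zero_smul, neg_zero] at key1 key2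
    obtain ⟨h1, h2⟩ := hPQ' _ _ key1
    obtain ⟨h3, h4⟩ := hPQ' _ _ key2
    have hP0 : P = 0 := by
      rw [hPuv]
      rw [neg_eq_zero] at h2 h4
      rw [h2, h4]
      simp
    exact one_ne_zero ((hPQ' 1 0 (by simp [hP0])).1)
  have hdR : (d : ℝ) ≠ 0 := Int.cast_ne_zero.mpr hd
  -- coordinates of lattice elements are in (1/d)ℤ
  have hcoord : ∀ x ∈ AddSubgroup.closure ({u, v} : Set (ℝ × ℝ)),
      ∃ a b : ℤ, (d : ℝ) * cp x = a ∧ (d : ℝ) * cq x = b := by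
    intro x hx
    obtain ⟨n', m', hx0⟩ := AddSubgroup.mem_closure_pair.mp hx
    have hx1 : x = (n' : ℝ) • u + (m' : ℝ) • v := by
      rw [← hx0]; push_cast [Int.cast_smul_eq_zsmul]; module
    have hxPQ : x = (((n' * q₂ - m' * q₁ : ℤ) : ℝ) / (d : ℝ)) • P
        + (((m' * p₁ - n' * p₂ : ℤ) : ℝ) / (d : ℝ)) • Q := by
      rw [hx1, hPuv, hQuv]
      push_cast
      match_scalars <;> field_simp <;> rw [hddef] <;> push_cast <;> ring
    refine ⟨n' * q₂ - m' * q₁, m' * p₁ - n' * p₂, ?_, ?_⟩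
    · rw [hxPQ, hcp]; field_simp
    · rw [hxPQ, hcq]; field_simp
  -- representation of -g for g ∈ G
  have hneg : ∀ g ∈ G, ∃ g' ∈ G, ∃ a b : ℤ, -g = g' + (a : ℝ) • P + (b : ℝ) • Q := by
    intro g hg
    obtain ⟨a₀, b₀, ha₀, hb₀⟩ := hcoord g (hGL g hg)
    obtain ⟨sg, tg, hgst, hsa, htb⟩ :
        ∃ s t : ℝ, g = s • P + t • Q ∧ (d : ℝ) * s = a₀ ∧ (d : ℝ) * t = b₀ :=
      ⟨cp g, cq g, hexp g, ha₀, hb₀⟩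
    have hnpos : 0 < d.natAbs := Int.natAbs_pos.mpr hd
    set k : ℕ := 2 * d.natAbs ^ 2 - 1 with hkdef
    have hkpos : 0 < k := by
      have : 1 ≤ d.natAbs ^ 2 := Nat.one_le_iff_ne_zero.mpr (by positivity)
      omega
    have hkR : (k : ℝ) = 2 * (d : ℝ) ^ 2 - 1 := by
      have h1 : k + 1 = 2 * d.natAbs ^ 2 := by omega
      have h3 : (k : ℝ) + 1 = 2 * ((d.natAbs : ℝ)) ^ 2 := by exact_mod_cast h1
      have h4 : ((d.natAbs : ℝ)) ^ 2 = (d : ℝ) ^ 2 := by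
        have h5 := congrArg (Int.cast : ℤ → ℝ) (Int.natAbs_sq d)
        push_cast at h5
        simpa using h5
      rw [h4] at h3
      linarith
    refine ⟨k • g, hGsmul g hg k hkpos, -(2 * d * a₀), -(2 * d * b₀), ?_⟩
    have hkg : (k : ℕ) • g = (k : ℝ) • g := (Nat.cast_smul_eq_nsmul ℝ k g).symm
    rw [hkg, hgst]
    push_cast
    match_scalars
    · rw [hkR]; linear_combination (-2 * (d : ℝ)) * hsa
    · rw [hkR]; linear_combination (-2 * (d : ℝ)) * htb
  -- every lattice element is g + aP + bQ with g ∈ G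
  have hrep : ∀ x ∈ AddSubgroup.closure G,
      ∃ g ∈ G, ∃ a b : ℤ, x = g + (a : ℝ) • P + (b : ℝ) • Q := by
    intro x hx
    induction hx using AddSubgroup.closure_induction with
    | mem g hg => exact ⟨g, hg, 0, 0, by simp⟩
    | zero => exact ⟨P, hP, -1, 0, by push_cast; module⟩
    | add x y hx hy ihx ihy =>
      obtain ⟨g1, hg1, a1, b1, h1⟩ := ihx
      obtain ⟨g2, hg2, a2, b2, h2⟩ := ihy
      exact ⟨g1 + g2, hGadd _ hg1 _ hg2, a1 + a2, b1 + b2, by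
        rw [h1, h2]; push_cast; module⟩
    | neg x hx ihx =>
      obtain ⟨g, hg, a, b, h1⟩ := ihx
      obtain ⟨g', hg', a', b', h2⟩ := hneg g hg
      exact ⟨g', hg', a' - a, b' - b, by
        rw [h1, neg_add, neg_add, h2]; push_cast; module⟩
  -- residue classes modulo ℤP + ℤQ
  set n : ℕ := d.natAbs with hndef
  have hn : n ≠ 0 := Int.natAbs_ne_zero.mpr hd
  haveI : NeZero n := ⟨hn⟩
  set F : ZMod n × ZMod n → ℝ := fun r =>
    if hr : ∃ h', h' ∈ G ∧ ∃ a b : ℤ, (d : ℝ) * cp h' = a ∧ (d : ℝ) * cq h' = b ∧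
        (a : ZMod n) = r.1 ∧ (b : ZMod n) = r.2
    then max (cp hr.choose) (cq hr.choose) else 0 with hFdef
  set C : ℝ := ∑ r : ZMod n × ZMod n, max (F r) 0 with hCdef
  have hC0 : 0 ≤ C := Finset.sum_nonneg fun r _ => le_max_right _ _
  have hCF : ∀ r, F r ≤ C := fun r =>
    le_trans (le_max_left _ _) (Finset.single_le_sum (f := fun r => max (F r) 0)
      (fun i _ => le_max_right _ _) (Finset.mem_univ r))
  refine ⟨C • P + C • Q, ⟨C, C, hC0, hC0, rfl⟩, ?_⟩
  rintro B ⟨s, t, hs, ht, rfl⟩ hmem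
  obtain ⟨g, hg, a, b, hx⟩ := hrep _ hmem
  obtain ⟨ag, bg, hag, hbg⟩ := hcoord g (hGL g hg)
  have hex : ∃ h', h' ∈ G ∧ ∃ a b : ℤ, (d : ℝ) * cp h' = a ∧ (d : ℝ) * cq h' = b ∧
      (a : ZMod n) = ((ag : ZMod n), (bg : ZMod n)).1 ∧
      (b : ZMod n) = ((ag : ZMod n), (bg : ZMod n)).2 :=
    ⟨g, hg, ag, bg, hag, hbg, rfl, rfl⟩
  obtain ⟨hhG, ah, bh, hah, hbh, hahr, hbhr⟩ := hex.choose_spec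
  set h := hex.choose with hhdef
  have hFr : F ((ag : ZMod n), (bg : ZMod n)) = max (cp h) (cq h) := by
    simp only [hFdef]
    rw [dif_pos hex]
  have hcph : cp h ≤ C := le_trans (le_trans (le_max_left _ _) hFr.ge) (hCF _)
  have hcqh : cq h ≤ C := le_trans (le_trans (le_max_right _ _) hFr.ge) (hCF _)
  -- congruences give divisibility by d
  have hdvd1 : ∃ c : ℤ, ag - ah = d * c := by
    have h1 : (ah : ZMod n) = (ag : ZMod n) := hahr
    have h2 : ((n : ℤ)) ∣ ag - ah := ((ZMod.intCast_eq_intCast_iff _ _ _).mp h1).dvd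
    have h3 : |d| ∣ ag - ah := by rwa [Int.abs_eq_natAbs]
    exact (abs_dvd _ _).mp h3
  have hdvd2 : ∃ c : ℤ, bg - bh = d * c := by
    have h1 : (bh : ZMod n) = (bg : ZMod n) := hbhr
    have h2 : ((n : ℤ)) ∣ bg - bh := ((ZMod.intCast_eq_intCast_iff _ _ _).mp h1).dvd
    have h3 : |d| ∣ bg - bh := by rwa [Int.abs_eq_natAbs]
    exact (abs_dvd _ _).mp h3
  obtain ⟨c1, hc1⟩ := hdvd1
  obtain ⟨c2, hc2⟩ := hdvd2
  -- two expressions for the coordinates of x = A + B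
  have e2 : C • P + C • Q + (s • P + t • Q) = (C + s) • P + (C + t) • Q := by module
  have e1 : C • P + C • Q + (s • P + t • Q) = (cp g + (a : ℝ)) • P + (cq g + (b : ℝ)) • Q := by
    rw [hx]
    nth_rewrite 1 [hexp g]
    module
  have hsg : cp g + (a : ℝ) = C + s := by
    have t1 := hcp (cp g + (a : ℝ)) (cq g + (b : ℝ)); rw [← e1] at t1
    have t2 := hcp (C + s) (C + t); rw [← e2] at t2
    rw [← t1, t2]
  have htg : cq g + (b : ℝ) = C + t := by
    have t1 := hcq (cp g + (a : ℝ)) (cq g + (b : ℝ)); rw [← e1] at t1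
    have t2 := hcq (C + s) (C + t); rw [← e2] at t2
    rw [← t1, t2]
  -- difference of coordinates of g and h is integral
  have hchg : cp g - cp h = (c1 : ℝ) := by
    have hq : (d : ℝ) * (cp g - cp h) = (d : ℝ) * (c1 : ℝ) := by
      have hcast : (ag : ℝ) - (ah : ℝ) = (d : ℝ) * (c1 : ℝ) := by exact_mod_cast congrArg (Int.cast : ℤ → ℝ) hc1
      rw [mul_sub, hag, hah, hcast]
    exact mul_left_cancel₀ hdR hq
  have hchg2 : cq g - cq h = (c2 : ℝ) := by
    have hq : (d : ℝ) * (cq g - cq h) = (d : ℝ) * (c2 : ℝ) := by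
      have hcast : (bg : ℝ) - (bh : ℝ) = (d : ℝ) * (c2 : ℝ) := by exact_mod_cast congrArg (Int.cast : ℤ → ℝ) hc2
      rw [mul_sub, hbg, hbh, hcast]
    exact mul_left_cancel₀ hdR hq
  -- the nonnegative integer coefficients
  set α : ℤ := a + c1 with hαdef
  set β : ℤ := b + c2 with hβdef
  have hαR : (α : ℝ) = C + s - cp h := by rw [hαdef]; push_cast; linarith
  have hβR : (β : ℝ) = C + t - cq h := by rw [hβdef]; push_cast; linarith
  have hα0 : 0 ≤ α := by
    have : (0 : ℝ) ≤ (α : ℝ) := by rw [hαR]; linarith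
    exact_mod_cast this
  have hβ0 : 0 ≤ β := by
    have : (0 : ℝ) ≤ (β : ℝ) := by rw [hβR]; linarith
    exact_mod_cast this
  have hα' : (α.toNat : ℝ) = (α : ℝ) := by exact_mod_cast Int.toNat_of_nonneg hα0
  have hβ' : (β.toNat : ℝ) = (β : ℝ) := by exact_mod_cast Int.toNat_of_nonneg hβ0
  have hfin : C • P + C • Q + (s • P + t • Q) = (h + (α.toNat : ℝ) • P) + (β.toNat : ℝ) • Q := by
    rw [e2]
    nth_rewrite 1 [hexp h]
    rw [hα', hβ', hαR, hβR]
    module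
  rw [hfin]
  exact hGQ _ (hGP _ hhG _) _
end
end
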